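/- Let 0 < a ≠ b and define f : ℕ → ℕ⁺ by log f(h) = a if m(m+1) < h ≤ (m+1)² for some m ∈ ℕ, and log f(h) = b otherwise. Then the growth rate of the spherically symmetric tree T_∞^f exists and equals e^{(a+b)/2}, i.e. lim_{n→∞} (1/n) Σ_{h=0}^{n−1} log f(h) = (a+b)/2; however, for every fixed k ≥ 1, the sequence n ↦ Σ_{h=n−k}^{n−1} log f(h) does not converge as n → ∞, so the transfinite fractal dimension of {T_n} does not exist. -/

import Mathlib

open Filter Finset

open scoped Classical

/-- A subgraph `B` of a graph `H` is an `ℓ`-box if any two of its vertices are at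
distance at most `ℓ - 1` *within* `B`. -/
def SimpleGraph.IsBox {V : Type*} (H : SimpleGraph V) (ℓ : ℕ) (B : H.Subgraph) : Prop :=
  ∀ u v : B.verts, B.coe.Reachable u v ∧ B.coe.dist u v ≤ ℓ - 1

/-- `coveringNumber H ℓ` is the minimum number of `ℓ`-boxes whose vertex sets cover `H`. -/
noncomputable def coveringNumber {V : Type*} (H : SimpleGraph V) (ℓ : ℕ) : ℕ :=
  sInf {m : ℕ | ∃ F : Finset H.Subgraph, F.card = m ∧ (∀ B ∈ F, H.IsBox ℓ B) ∧
    ∀ v : V, ∃ B ∈ F, v ∈ B.verts}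

/-- Vertices of the spherically symmetric tree with offspring sequence `f`:
a vertex at depth `n` is a sequence of child-indices, the index chosen at depth `i`
lying in `Fin (f i)`. -/
def SSTVert (f : ℕ → ℕ) : Type := Σ n : ℕ, ∀ i : Fin n, Fin (f i)

/-- Parent-child relation of the spherically symmetric tree: `y` is a child of `x`. -/
def SSTRel (f : ℕ → ℕ) (x y : SSTVert f) : Prop :=
  ∃ h : y.1 = x.1 + 1, ∀ i : Fin x.1, (x.2 i : ℕ) = (y.2 ⟨i.1, by omega⟩ : ℕ)

/-- The spherically symmetric tree with offspring sequence `f`, as a graph on all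
vertices: every vertex at depth `h` has exactly `f h` children. -/
def SST (f : ℕ → ℕ) : SimpleGraph (SSTVert f) := SimpleGraph.fromRel (SSTRel f)

/-- The root of the spherically symmetric tree. -/
def SSTroot (f : ℕ → ℕ) : SSTVert f := ⟨0, fun i => i.elim0⟩

/-- The truncation `T_n` of the spherically symmetric tree at height `n`. -/
def SSTtrunc (f : ℕ → ℕ) (n : ℕ) : SimpleGraph {v : SSTVert f // v.1 ≤ n} :=
  SimpleGraph.induce {v : SSTVert f | v.1 ≤ n} (SST f)

/-- `SSTgen f n` = number of vertices of the spherically symmetric tree at graph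
distance `n` from the root (the size `L_n` of generation `n`). -/
noncomputable def SSTgen (f : ℕ → ℕ) (n : ℕ) : ℕ :=
  Nat.card {v : SSTVert f // (SST f).dist (SSTroot f) v = n}

def SSTcond (h : ℕ) : Prop := ∃ m : ℕ, m * (m + 1) < h ∧ h ≤ (m + 1) ^ 2

lemma sstcond_false {m h : ℕ} (h1 : (m+1)^2 < h) (h2 : h ≤ (m+1)*(m+2)) : ¬ SSTcond h := by
  rintro ⟨m', hm1, hm2⟩
  rcases le_or_gt m' m with hle | hlt
  · have : (m'+1)^2 ≤ (m+1)^2 := by nlinarith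
    omega
  · have : (m+1)*(m+2) ≤ m'*(m'+1) := by nlinarith
    omega

section g
variable (a b : ℝ)

noncomputable def gfun (h : ℕ) : ℝ := if SSTcond h then a else b

lemma gfun_a {h : ℕ} (hc : SSTcond h) : gfun a b h = a := if_pos hc
lemma gfun_b {h : ℕ} (hc : ¬ SSTcond h) : gfun a b h = b := if_neg hc

lemma gfun_boundary : ∀ m : ℕ,
    ∑ h ∈ range (m*(m+1)+1), gfun a b h = b + (m*(m+1) : ℝ) * ((a+b)/2) := by
  intro m
  induction m with
  | zero =>
    simp [gfun, SSTcond]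
  | succ m ih =>
    have le1 : m*(m+1)+1 ≤ (m+1)^2+1 := by nlinarith
    have le2 : (m+1)^2+1 ≤ (m+1)*(m+2)+1 := by nlinarith
    have k2 := Finset.sum_range_add_sum_Ico (gfun a b) le1
    have k1 := Finset.sum_range_add_sum_Ico (gfun a b) le2
    have sA : ∑ h ∈ Ico (m*(m+1)+1) ((m+1)^2+1), gfun a b h = (m+1 : ℝ) * a := by
      have hc : ∀ h ∈ Ico (m*(m+1)+1) ((m+1)^2+1), gfun a b h = a := by
        intro h hh
        rw [Finset.mem_Ico] at hh
        exact gfun_a a b ⟨m, by omega, by omega⟩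
      rw [Finset.sum_congr rfl hc, Finset.sum_const, Nat.card_Ico]
      have hsq : (m+1)^2 = m*m+2*m+1 := by ring
      have : (m+1)^2+1 - (m*(m+1)+1) = m+1 := by
        have : m*(m+1) = m*m+m := by ring
        omega
      rw [this]
      simp only [nsmul_eq_mul]
      push_cast; ring
    have sB : ∑ h ∈ Ico ((m+1)^2+1) ((m+1)*(m+2)+1), gfun a b h = (m+1 : ℝ) * b := by
      have hc : ∀ h ∈ Ico ((m+1)^2+1) ((m+1)*(m+2)+1), gfun a b h = b := by
        intro h hh
        rw [Finset.mem_Ico] at hh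
        exact gfun_b a b (sstcond_false (m := m) (by omega) (by omega))
      rw [Finset.sum_congr rfl hc, Finset.sum_const, Nat.card_Ico]
      have hsq : (m+1)^2 = m*m+2*m+1 := by ring
      have : (m+1)*(m+2)+1 - ((m+1)^2+1) = m+1 := by
        have : (m+1)*(m+2) = m*m+3*m+2 := by ring
        omega
      rw [this]
      simp only [nsmul_eq_mul]
      push_cast; ring
    rw [← k1, ← k2, sA, sB, ih]
    push_cast
    ring

lemma gfun_partial_bound (ha : 0 < a) (hb : 0 < b) : ∀ n : ℕ,
    |(∑ h ∈ range n, gfun a b h) - (n : ℝ) * ((a+b)/2)| ≤ (a+b) * ((Nat.sqrt n : ℝ) + 2) := by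
  intro n
  rcases Nat.eq_zero_or_pos n with rfl | hn
  · simp; positivity
  obtain ⟨m, hm1, hm2, hms⟩ : ∃ m, m*(m+1) < n ∧ n ≤ (m+1)*(m+2) ∧ m ≤ Nat.sqrt n := by
    have h1 : (Nat.sqrt n)^2 ≤ n := Nat.sqrt_le' n
    have h2 : n < (Nat.sqrt n + 1)^2 := Nat.lt_succ_sqrt' n
    rcases lt_or_ge (Nat.sqrt n * (Nat.sqrt n + 1)) n with h | h
    · exact ⟨Nat.sqrt n, h, by nlinarith, le_refl _⟩
    · have hs1 : 1 ≤ Nat.sqrt n := by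
        by_contra h0
        have h00 : Nat.sqrt n = 0 := by omega
        rw [h00] at h; omega
      obtain ⟨t, ht⟩ : ∃ t, Nat.sqrt n = t + 1 := ⟨Nat.sqrt n - 1, by omega⟩
      rw [ht] at h1 h2 h
      refine ⟨t, by nlinarith, by nlinarith, by omega⟩
  have hsplit : ∑ h ∈ range n, gfun a b h
      = (∑ h ∈ range (m*(m+1)+1), gfun a b h) + ∑ h ∈ Ico (m*(m+1)+1) n, gfun a b h :=
    (Finset.sum_range_add_sum_Ico _ (by omega)).symm
  rw [hsplit, gfun_boundary]
  have habs : ∀ h, |gfun a b h - (a+b)/2| ≤ (a+b)/2 := by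
    intro h
    unfold gfun
    split_ifs
    · rw [abs_le]; constructor <;> nlinarith
    · rw [abs_le]; constructor <;> nlinarith
  have hcardn : n - (m*(m+1)+1) ≤ 2*m + 1 := by
    have : (m+1)*(m+2) = m*(m+1)+2*m+2 := by ring
    omega
  have hcard : ((n - (m*(m+1)+1) : ℕ) : ℝ) ≤ 2*(m:ℝ) + 1 := by exact_mod_cast hcardn
  have hIco : |∑ h ∈ Ico (m*(m+1)+1) n, (gfun a b h - (a+b)/2)| ≤ (2*(m:ℝ)+1) * ((a+b)/2) := by
    calc |∑ h ∈ Ico (m*(m+1)+1) n, (gfun a b h - (a+b)/2)|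
        ≤ ∑ h ∈ Ico (m*(m+1)+1) n, |gfun a b h - (a+b)/2| := Finset.abs_sum_le_sum_abs _ _
      _ ≤ ∑ h ∈ Ico (m*(m+1)+1) n, (a+b)/2 := Finset.sum_le_sum (fun h _ => habs h)
      _ = ((n - (m*(m+1)+1) : ℕ) : ℝ) * ((a+b)/2) := by
          rw [Finset.sum_const, Nat.card_Ico]; simp only [nsmul_eq_mul]
      _ ≤ (2*(m:ℝ)+1) * ((a+b)/2) := by
          apply mul_le_mul_of_nonneg_right hcard; positivity
  have hIco' : ∑ h ∈ Ico (m*(m+1)+1) n, gfun a b h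
      = (∑ h ∈ Ico (m*(m+1)+1) n, (gfun a b h - (a+b)/2)) + ((n - (m*(m+1)+1) : ℕ) : ℝ) * ((a+b)/2) := by
    rw [Finset.sum_sub_distrib, Finset.sum_const, Nat.card_Ico]
    simp only [nsmul_eq_mul]
    ring
  rw [hIco']
  have hcast : ((n - (m*(m+1)+1) : ℕ) : ℝ) = (n:ℝ) - (m:ℝ)*((m:ℝ)+1) - 1 := by
    have hle : (m*(m+1)+1) ≤ n := by omega
    rw [Nat.cast_sub hle]
    push_cast
    ring
  rw [hcast]
  have hmn : (m : ℝ) ≤ (Nat.sqrt n : ℝ) := by exact_mod_cast hms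
  set S := ∑ h ∈ Ico (m*(m+1)+1) n, (gfun a b h - (a+b)/2) with hS
  have expand : b + (m:ℝ)*((m:ℝ)+1) * ((a+b)/2) + (S + ((n:ℝ) - (m:ℝ)*((m:ℝ)+1) - 1) * ((a+b)/2))
      - (n:ℝ) * ((a+b)/2) = (b - (a+b)/2) + S := by ring
  rw [expand]
  calc |(b - (a+b)/2) + S| ≤ |b - (a+b)/2| + |S| := abs_add_le _ _
    _ ≤ (a+b)/2 + (2*(m:ℝ)+1) * ((a+b)/2) := by
        have hb1 : |b - (a+b)/2| ≤ (a+b)/2 := by rw [abs_le]; constructor <;> nlinarith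
        exact add_le_add hb1 hIco
    _ ≤ (a+b) * ((Nat.sqrt n : ℝ) + 2) := by nlinarith
end g

lemma sqrt_nat_tendsto_atTop : Tendsto (fun n : ℕ => Real.sqrt n) atTop atTop := by
  apply tendsto_atTop_atTop.mpr
  intro M
  refine ⟨⌈M^2⌉₊, fun n hn => ?_⟩
  have h1 : (M^2 : ℝ) ≤ n := le_trans (Nat.le_ceil _) (by exact_mod_cast hn)
  rcases le_or_gt M 0 with h|h
  · exact le_trans h (Real.sqrt_nonneg _)
  · calc M = Real.sqrt (M^2) := by rw [Real.sqrt_sq h.le]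
      _ ≤ Real.sqrt n := Real.sqrt_le_sqrt h1

section g2
variable (a b : ℝ)

lemma gfun_avg_tendsto (ha : 0 < a) (hb : 0 < b) :
    Tendsto (fun n : ℕ => (∑ h ∈ range n, gfun a b h) / n) atTop (nhds ((a+b)/2)) := by
  rw [← tendsto_sub_nhds_zero_iff]
  apply squeeze_zero_norm' (a := fun n : ℕ => 3*(a+b) * (Real.sqrt n)⁻¹)
  · filter_upwards [eventually_ge_atTop 1] with n hn
    have hn0 : (0:ℝ) < n := by exact_mod_cast hn
    have hsq1 : (1:ℝ) ≤ Real.sqrt n := by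
      rw [show (1:ℝ) = Real.sqrt 1 by simp]
      exact Real.sqrt_le_sqrt (by exact_mod_cast hn)
    have hsq0 : (0:ℝ) < Real.sqrt n := by linarith
    have hns : (Nat.sqrt n : ℝ) ≤ Real.sqrt n := Real.nat_sqrt_le_real_sqrt
    have hkey := gfun_partial_bound a b ha hb n
    have hmulself : Real.sqrt n * Real.sqrt n = n := Real.mul_self_sqrt hn0.le
    have heq : (∑ h ∈ range n, gfun a b h)/n - (a+b)/2
        = ((∑ h ∈ range n, gfun a b h) - (n:ℝ)*((a+b)/2))/n := by
      rw [sub_div, mul_comm, mul_div_assoc, div_self hn0.ne', mul_one]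
    rw [Real.norm_eq_abs, heq, abs_div, abs_of_pos hn0, div_le_iff₀ hn0]
    calc |(∑ h ∈ range n, gfun a b h) - (n:ℝ) * ((a+b)/2)|
        ≤ (a+b) * ((Nat.sqrt n : ℝ) + 2) := hkey
      _ ≤ (a+b) * (3 * Real.sqrt n) := by
          apply mul_le_mul_of_nonneg_left _ (by positivity)
          linarith
      _ = 3*(a+b) * (Real.sqrt n)⁻¹ * n := by
          field_simp
          linear_combination hmulself
  · have := (sqrt_nat_tendsto_atTop.inv_tendsto_atTop).const_mul (3*(a+b))
    simpa using this

lemma gfun_window_a (k m : ℕ) (hk : k ≤ m) :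
    ∑ h ∈ Ico ((m+1)^2 - k) ((m+1)^2), gfun a b h = (k:ℝ) * a := by
  have hsq : (m+1)^2 = m*m+2*m+1 := by ring
  have hmm : m*(m+1) = m*m+m := by ring
  have hc : ∀ h ∈ Ico ((m+1)^2 - k) ((m+1)^2), gfun a b h = a := by
    intro h hh
    rw [Finset.mem_Ico] at hh
    exact gfun_a a b ⟨m, by omega, by omega⟩
  rw [Finset.sum_congr rfl hc, Finset.sum_const, Nat.card_Ico]
  have : (m+1)^2 - ((m+1)^2 - k) = k := by omega
  rw [this]
  simp [nsmul_eq_mul]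

lemma gfun_window_b (k m : ℕ) (hk : k ≤ m) :
    ∑ h ∈ Ico ((m+1)*(m+2) - k) ((m+1)*(m+2)), gfun a b h = (k:ℝ) * b := by
  have hsq : (m+1)^2 = m*m+2*m+1 := by ring
  have hmm : (m+1)*(m+2) = m*m+3*m+2 := by ring
  have hc : ∀ h ∈ Ico ((m+1)*(m+2) - k) ((m+1)*(m+2)), gfun a b h = b := by
    intro h hh
    rw [Finset.mem_Ico] at hh
    exact gfun_b a b (sstcond_false (m := m) (by omega) (by omega))
  rw [Finset.sum_congr rfl hc, Finset.sum_const, Nat.card_Ico]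
  have : (m+1)*(m+2) - ((m+1)*(m+2) - k) = k := by omega
  rw [this]
  simp [nsmul_eq_mul]

lemma sq_seq_tendsto : Tendsto (fun m : ℕ => (m+1)^2) atTop atTop :=
  tendsto_atTop_mono (fun m => by simp only [id_eq]; nlinarith) tendsto_id

lemma pr_seq_tendsto : Tendsto (fun m : ℕ => (m+1)*(m+2)) atTop atTop :=
  tendsto_atTop_mono (fun m => by simp only [id_eq]; nlinarith) tendsto_id

lemma gfun_window_subseq_a (k : ℕ) {c : ℝ}
    (hc : Tendsto (fun n : ℕ => ∑ h ∈ Ico (n - k) n, gfun a b h) atTop (nhds c)) :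
    c = (k:ℝ) * a := by
  have h1 := hc.comp (sq_seq_tendsto)
  have h2 : Tendsto (fun _ : ℕ => (k:ℝ) * a) atTop (nhds c) := by
    apply h1.congr'
    filter_upwards [eventually_ge_atTop k] with m hm
    simp only [Function.comp_apply]
    exact gfun_window_a a b k m hm
  exact tendsto_nhds_unique h2 tendsto_const_nhds

lemma gfun_window_subseq_b (k : ℕ) {c : ℝ}
    (hc : Tendsto (fun n : ℕ => ∑ h ∈ Ico (n - k) n, gfun a b h) atTop (nhds c)) :
    c = (k:ℝ) * b := by
  have h1 := hc.comp (pr_seq_tendsto)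
  have h2 : Tendsto (fun _ : ℕ => (k:ℝ) * b) atTop (nhds c) := by
    apply h1.congr'
    filter_upwards [eventually_ge_atTop k] with m hm
    simp only [Function.comp_apply]
    exact gfun_window_b a b k m hm
  exact tendsto_nhds_unique h2 tendsto_const_nhds

lemma gfun_window_not_conv (hab : a ≠ b) (k : ℕ) (hk : 1 ≤ k) :
    ¬ ∃ c : ℝ, Tendsto (fun n : ℕ => ∑ h ∈ Ico (n - k) n, gfun a b h) atTop (nhds c) := by
  rintro ⟨c, hc⟩
  have h1 := gfun_window_subseq_a a b k hc
  have h2 := gfun_window_subseq_b a b k hc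
  have hk0 : (k:ℝ) ≠ 0 := by positivity
  exact hab (mul_left_cancel₀ hk0 (h1 ▸ h2))
end g2

section graph
variable (f : ℕ → ℕ)

lemma sst_adj_iff {x y : SSTVert f} :
    (SST f).Adj x y ↔ x ≠ y ∧ (SSTRel f x y ∨ SSTRel f y x) := SimpleGraph.fromRel_adj _ x y

lemma sst_adj_depth {x y : SSTVert f} (h : (SST f).Adj x y) :
    y.1 = x.1 + 1 ∨ x.1 = y.1 + 1 := by
  rcases (sst_adj_iff f).1 h with ⟨-, h1 | h1⟩
  · exact Or.inl h1.1
  · exact Or.inr h1.1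

lemma sst_adj_prefix {x y : SSTVert f} (h : (SST f).Adj x y) (j : ℕ)
    (hjx : j < x.1) (hjy : j < y.1) :
    (x.2 ⟨j, hjx⟩ : ℕ) = (y.2 ⟨j, hjy⟩ : ℕ) := by
  rcases (sst_adj_iff f).1 h with ⟨-, ⟨hd, hc⟩ | ⟨hd, hc⟩⟩
  · exact hc ⟨j, hjx⟩
  · exact (hc ⟨j, hjy⟩).symm

lemma sst_walk_depth {x y : SSTVert f} (p : (SST f).Walk x y) :
    y.1 ≤ x.1 + p.length ∧ x.1 ≤ y.1 + p.length := by
  induction p with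
  | nil => simp
  | cons h q ih =>
    rw [SimpleGraph.Walk.length_cons]
    rcases sst_adj_depth f h with h1 | h1 <;> omega

lemma sst_walk_exists_low {x y : SSTVert f} (p : (SST f).Walk x y) : ∀ (j : ℕ)
    (hjx : j < x.1) (hjy : j < y.1),
    (x.2 ⟨j, hjx⟩ : ℕ) ≠ (y.2 ⟨j, hjy⟩ : ℕ) → ∃ w ∈ p.support, w.1 ≤ j := by
  induction p with
  | nil =>
    intro j hjx hjy hne
    exact (hne rfl).elim
  | @cons xx vv yy h q ih =>
    intro j hjx hjy hne
    rcases le_or_gt vv.1 j with hw | hw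
    · exact ⟨vv, by simp, hw⟩
    · have hpre : (xx.2 ⟨j, hjx⟩ : ℕ) = (vv.2 ⟨j, hw⟩ : ℕ) := sst_adj_prefix f h j hjx hw
      obtain ⟨u, hu, hu2⟩ := ih j hw hjy (by rw [← hpre]; exact hne)
      exact ⟨u, by simp [hu], hu2⟩

lemma sst_sep_length {x y : SSTVert f} (p : (SST f).Walk x y) (j : ℕ)
    (hjx : j < x.1) (hjy : j < y.1)
    (hne : (x.2 ⟨j, hjx⟩ : ℕ) ≠ (y.2 ⟨j, hjy⟩ : ℕ)) :
    (x.1 - j) + (y.1 - j) ≤ p.length := by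
  obtain ⟨w, hw, hwj⟩ := sst_walk_exists_low f p j hjx hjy hne
  have h1 := sst_walk_depth f (p.takeUntil w hw)
  have h2 := sst_walk_depth f (p.dropUntil w hw)
  have h3 : (p.takeUntil w hw).length + (p.dropUntil w hw).length = p.length := by
    rw [← SimpleGraph.Walk.length_append, SimpleGraph.Walk.take_spec]
  omega

lemma sstVert_ext {x y : SSTVert f} (hd : x.1 = y.1)
    (hc : ∀ j (hjx : j < x.1) (hjy : j < y.1), (x.2 ⟨j, hjx⟩ : ℕ) = (y.2 ⟨j, hjy⟩ : ℕ)) :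
    x = y := by
  obtain ⟨n, g⟩ := x
  obtain ⟨m, g'⟩ := y
  dsimp at hd
  subst hd
  have hg : g = g' := by
    funext i
    exact Fin.ext (hc i.1 i.2 i.2)
  rw [hg]

def sstAnc (v : SSTVert f) (d : ℕ) : SSTVert f :=
  ⟨min d v.1, fun i => v.2 ⟨i.1, lt_of_lt_of_le i.2 (min_le_right d v.1)⟩⟩

lemma sstAnc_fst (v : SSTVert f) (d : ℕ) : (sstAnc f v d).1 = min d v.1 := rfl

lemma sstAnc_snd (v : SSTVert f) (d : ℕ) (j : ℕ) (hj : j < (sstAnc f v d).1)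
    (hj' : j < v.1) : ((sstAnc f v d).2 ⟨j, hj⟩ : ℕ) = (v.2 ⟨j, hj'⟩ : ℕ) := rfl

lemma sstAnc_self (v : SSTVert f) (d : ℕ) (h : v.1 ≤ d) : sstAnc f v d = v := by
  apply sstVert_ext
  · rw [sstAnc_fst]; omega
  · intro j hjx hjy
    exact sstAnc_snd f v d j hjx hjy

lemma sstAnc_anc (v : SSTVert f) (d e : ℕ) (h : d ≤ e) :
    sstAnc f (sstAnc f v e) d = sstAnc f v d := by
  apply sstVert_ext
  · rw [sstAnc_fst, sstAnc_fst, sstAnc_fst]; omega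
  · intro j hjx hjy
    rfl

lemma sstAnc_adj (v : SSTVert f) (d : ℕ) (hd : d < v.1) :
    (SST f).Adj (sstAnc f v d) (sstAnc f v (d+1)) := by
  rw [sst_adj_iff]
  constructor
  · intro heq
    have := congrArg Sigma.fst heq
    rw [sstAnc_fst, sstAnc_fst] at this
    omega
  · left
    refine ⟨?_, fun i => rfl⟩
    rw [sstAnc_fst, sstAnc_fst]
    omega

lemma sstAnc_walk (v : SSTVert f) : ∀ (c d : ℕ), d + c = v.1 →
    ∃ p : (SST f).Walk (sstAnc f v d) v, p.length = c ∧
      ∀ w ∈ p.support, d ≤ w.1 ∧ w = sstAnc f v w.1 := by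
  intro c
  induction c with
  | zero =>
    intro d hd
    have he : sstAnc f v d = v := sstAnc_self f v d (by omega)
    refine ⟨(SimpleGraph.Walk.nil).copy he.symm rfl, by simp, ?_⟩
    intro w hw
    rw [SimpleGraph.Walk.support_copy] at hw
    simp only [SimpleGraph.Walk.support_nil, List.mem_singleton] at hw
    rw [hw]
    exact ⟨by omega, (sstAnc_self f v v.1 le_rfl).symm⟩
  | succ c ih =>
    intro d hd
    obtain ⟨p, hl, hs⟩ := ih (d+1) (by omega)
    have hadj := sstAnc_adj f v d (by omega)
    refine ⟨SimpleGraph.Walk.cons hadj p, by simp [hl], ?_⟩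
    intro w hw
    rw [SimpleGraph.Walk.support_cons] at hw
    rcases List.mem_cons.1 hw with rfl | hw'
    · constructor
      · rw [sstAnc_fst]; omega
      · have hmin : min d v.1 = d := by omega
        rw [sstAnc_fst, hmin]
    · obtain ⟨h1, h2⟩ := hs w hw'
      exact ⟨by omega, h2⟩

lemma sstAnc_zero (v : SSTVert f) : sstAnc f v 0 = SSTroot f := by
  apply sstVert_ext
  · rw [sstAnc_fst]
    simp [SSTroot]
  · intro j hjx hjy
    exfalso
    have : (SSTroot f).1 = 0 := rfl
    omega

lemma sst_dist_root (v : SSTVert f) : (SST f).dist (SSTroot f) v = v.1 := by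
  obtain ⟨p, hl, -⟩ := sstAnc_walk f v v.1 0 (by omega)
  have hub : (SST f).dist (SSTroot f) v ≤ v.1 := by
    have h := SimpleGraph.dist_le (p.copy (sstAnc_zero f v) rfl)
    rwa [SimpleGraph.Walk.length_copy, hl] at h
  have hreach : (SST f).Reachable (SSTroot f) v := ⟨p.copy (sstAnc_zero f v) rfl⟩
  obtain ⟨q, hq⟩ := hreach.exists_walk_length_eq_dist
  have hd := (sst_walk_depth f q).1
  have hroot : (SSTroot f).1 = 0 := rfl
  omega

def sstDepthEquiv (n : ℕ) : {v : SSTVert f // v.1 = n} ≃ (∀ i : Fin n, Fin (f i)) where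
  toFun x := fun i => x.1.2 ⟨i.1, by rw [x.2]; exact i.2⟩
  invFun g := ⟨⟨n, g⟩, rfl⟩
  left_inv := by rintro ⟨⟨m, g⟩, rfl⟩; rfl
  right_inv g := rfl

lemma sstgen_eq (n : ℕ) : SSTgen f n = ∏ i ∈ range n, f i := by
  unfold SSTgen
  have e0 : {v : SSTVert f // (SST f).dist (SSTroot f) v = n} ≃ {v : SSTVert f // v.1 = n} :=
    Equiv.subtypeEquivRight (fun v => by rw [sst_dist_root f v])
  rw [Nat.card_congr (e0.trans (sstDepthEquiv f n)), Nat.card_pi]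
  rw [← Fin.prod_univ_eq_prod_range (fun i => f i) n]
  congr 1
  funext i
  simp [Nat.card_eq_fintype_card]

end graph

section count
variable (f : ℕ → ℕ)

def sstLeEquiv (n : ℕ) : {v : SSTVert f // v.1 ≤ n} ≃ Σ h : Fin (n+1), (∀ i : Fin h.1, Fin (f i)) where
  toFun x := ⟨⟨x.1.1, by omega⟩, x.1.2⟩
  invFun s := ⟨⟨s.1.1, s.2⟩, Nat.lt_succ_iff.mp s.1.2⟩
  left_inv := by rintro ⟨⟨m, g⟩, h⟩; rfl
  right_inv := by rintro ⟨⟨m, hm⟩, g⟩; rfl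

def sstLtEquiv (n : ℕ) : {v : SSTVert f // v.1 < n} ≃ Σ h : Fin n, (∀ i : Fin h.1, Fin (f i)) where
  toFun x := ⟨⟨x.1.1, x.2⟩, x.1.2⟩
  invFun s := ⟨⟨s.1.1, s.2⟩, s.1.2⟩
  left_inv := by rintro ⟨⟨m, g⟩, h⟩; rfl
  right_inv := by rintro ⟨⟨m, hm⟩, g⟩; rfl

noncomputable instance sstLeFintype (n : ℕ) : Fintype {v : SSTVert f // v.1 ≤ n} :=
  Fintype.ofEquiv _ (sstLeEquiv f n).symm

lemma card_le_eq (n : ℕ) :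
    Nat.card {v : SSTVert f // v.1 ≤ n} = ∑ h ∈ range (n+1), ∏ i ∈ range h, f i := by
  rw [Nat.card_congr (sstLeEquiv f n), Nat.card_eq_fintype_card, Fintype.card_sigma,
    ← Fin.sum_univ_eq_sum_range (fun h => ∏ i ∈ range h, f i) (n+1)]
  apply Finset.sum_congr rfl
  intro h _
  rw [Fintype.card_pi, ← Fin.prod_univ_eq_prod_range (fun i => f i) h.1]
  exact Finset.prod_congr rfl (fun i _ => Fintype.card_fin _)

lemma card_lt_eq (n : ℕ) :
    Nat.card {v : SSTVert f // v.1 < n} = ∑ h ∈ range n, ∏ i ∈ range h, f i := by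
  rw [Nat.card_congr (sstLtEquiv f n), Nat.card_eq_fintype_card, Fintype.card_sigma,
    ← Fin.sum_univ_eq_sum_range (fun h => ∏ i ∈ range h, f i) n]
  apply Finset.sum_congr rfl
  intro h _
  rw [Fintype.card_pi, ← Fin.prod_univ_eq_prod_range (fun i => f i) h.1]
  exact Finset.prod_congr rfl (fun i _ => Fintype.card_fin _)

def truncHom (n : ℕ) : SSTtrunc f n →g SST f := ⟨Subtype.val, fun {u v} h => h⟩

def boxSet (n d : ℕ) (z : SSTVert f) : Set {v : SSTVert f // v.1 ≤ n} :=
  {x | d ≤ x.1.1 ∧ sstAnc f x.1 d = z}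

def boxSub (n d : ℕ) (z : SSTVert f) : (SSTtrunc f n).Subgraph :=
  (⊤ : (SSTtrunc f n).Subgraph).induce (boxSet f n d z)

lemma boxSub_verts (n d : ℕ) (z : SSTVert f) :
    (boxSub f n d z).verts = boxSet f n d z := rfl

lemma boxRoot_mem (n d : ℕ) (z : SSTVert f) (hz : z.1 = d) (hzn : z.1 ≤ n) :
    (⟨z, hzn⟩ : {v : SSTVert f // v.1 ≤ n}) ∈ (boxSub f n d z).verts := by
  rw [boxSub_verts]
  refine ⟨?_, sstAnc_self f z d (by omega)⟩
  show d ≤ z.1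
  omega

lemma box_walk (n d : ℕ) (z : SSTVert f) (hz : z.1 = d) (hzn : z.1 ≤ n) :
    ∀ (c : ℕ) (x : {v : SSTVert f // v.1 ≤ n}) (hx : x ∈ (boxSub f n d z).verts),
    x.1.1 = d + c →
    ∃ p : (boxSub f n d z).coe.Walk ⟨⟨z, hzn⟩, boxRoot_mem f n d z hz hzn⟩ ⟨x, hx⟩,
      p.length = c := by
  intro c
  induction c with
  | zero =>
    intro x hx hd
    have hx1 : x.1 = z := by
      have h1 := hx.2
      rwa [sstAnc_self f x.1 d (by omega)] at h1
    have hxx : (⟨x, hx⟩ : ↥(boxSub f n d z).verts)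
        = ⟨⟨z, hzn⟩, boxRoot_mem f n d z hz hzn⟩ := by
      apply Subtype.ext
      apply Subtype.ext
      exact hx1
    refine ⟨SimpleGraph.Walk.nil.copy rfl hxx.symm, ?_⟩
    simp
  | succ c ih =>
    intro x hx hd
    have hxn : x.1.1 ≤ n := x.2
    have hanc1 : (sstAnc f x.1 (d+c)).1 = d + c := by
      rw [sstAnc_fst]; omega
    have hyn : (sstAnc f x.1 (d+c)).1 ≤ n := by omega
    set y : {v : SSTVert f // v.1 ≤ n} := ⟨sstAnc f x.1 (d+c), hyn⟩ with hy
    have hymem : y ∈ (boxSub f n d z).verts := by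
      rw [boxSub_verts]
      constructor
      · rw [hanc1]; omega
      · rw [hy]
        show sstAnc f (sstAnc f x.1 (d+c)) d = z
        rw [sstAnc_anc f x.1 d (d+c) (by omega)]
        exact hx.2
    obtain ⟨p, hp⟩ := ih y hymem hanc1
    have hadj0 : (SST f).Adj (sstAnc f x.1 (d+c)) x.1 := by
      have h1 := sstAnc_adj f x.1 (d+c) (by omega)
      rwa [sstAnc_self f x.1 (d+c+1) (by omega)] at h1
    have hadj : (boxSub f n d z).coe.Adj ⟨y, hymem⟩ ⟨x, hx⟩ := by
      show (boxSub f n d z).Adj y x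
      rw [boxSub]
      rw [SimpleGraph.Subgraph.induce_adj]
      refine ⟨hymem, hx, ?_⟩
      rw [SimpleGraph.Subgraph.top_adj]
      exact hadj0
    refine ⟨p.concat hadj, ?_⟩
    rw [SimpleGraph.Walk.length_concat, hp]

lemma boxSub_isBox (n k : ℕ) (hkn : k ≤ n) (z : SSTVert f) (hz : z.1 = n - k)
    (ℓ : ℕ) (hl : 2*k + 1 ≤ ℓ) : (SSTtrunc f n).IsBox ℓ (boxSub f n (n-k) z) := by
  intro u v
  have hzn : z.1 ≤ n := by omega
  have hu1 : n - k ≤ u.1.1.1 := u.2.1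
  have hv1 : n - k ≤ v.1.1.1 := v.2.1
  have huc : u.1.1.1 = (n-k) + (u.1.1.1 - (n-k)) := by omega
  have hvc : v.1.1.1 = (n-k) + (v.1.1.1 - (n-k)) := by omega
  obtain ⟨pu, hpu⟩ := box_walk f n (n-k) z hz hzn (u.1.1.1 - (n-k)) u.1 u.2 huc
  obtain ⟨pv, hpv⟩ := box_walk f n (n-k) z hz hzn (v.1.1.1 - (n-k)) v.1 v.2 hvc
  have hue : (⟨u.1, u.2⟩ : ↥(boxSub f n (n-k) z).verts) = u := rfl
  have hve : (⟨v.1, v.2⟩ : ↥(boxSub f n (n-k) z).verts) = v := rfl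
  let q : (boxSub f n (n-k) z).coe.Walk u v :=
    ((pu.copy rfl hue).reverse.append (pv.copy rfl hve))
  have hql : q.length = (u.1.1.1 - (n-k)) + (v.1.1.1 - (n-k)) := by
    show ((pu.copy rfl hue).reverse.append (pv.copy rfl hve)).length = _
    rw [SimpleGraph.Walk.length_append, SimpleGraph.Walk.length_reverse,
      SimpleGraph.Walk.length_copy, SimpleGraph.Walk.length_copy, hpu, hpv]
  constructor
  · exact ⟨q⟩
  · have hd := SimpleGraph.dist_le q
    have hun : u.1.1.1 ≤ n := u.1.2
    have hvn : v.1.1.1 ≤ n := v.1.2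
    omega

lemma singleton_isBox {V : Type*} (H : SimpleGraph V) (x : V) (ℓ : ℕ) :
    H.IsBox ℓ (H.singletonSubgraph x) := by
  intro u v
  have hu : u.1 = x := u.2
  have hv : v.1 = x := v.2
  have huv : u = v := Subtype.ext (hu.trans hv.symm)
  subst huv
  exact ⟨SimpleGraph.Reachable.refl u, by rw [SimpleGraph.dist_self]; omega⟩

end count

section cov
variable (f : ℕ → ℕ)

def sstEqLtEquiv (n m : ℕ) (hmn : m ≤ n) :
    {x : {v : SSTVert f // v.1 ≤ n} // x.1.1 < m} ≃ {v : SSTVert f // v.1 < m} where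
  toFun x := ⟨x.1.1, x.2⟩
  invFun v := ⟨⟨v.1, by omega⟩, v.2⟩
  left_inv := by rintro ⟨⟨v, h1⟩, h2⟩; rfl
  right_inv := by rintro ⟨v, h⟩; rfl

lemma cov_exists (n k : ℕ) (hkn : k ≤ n) :
    ∃ F : Finset (SSTtrunc f n).Subgraph,
      (∀ B ∈ F, (SSTtrunc f n).IsBox (2*k+1) B) ∧
      (∀ v : {v : SSTVert f // v.1 ≤ n}, ∃ B ∈ F, v ∈ B.verts) ∧
      F.card ≤ ∑ h ∈ range (n-k+1), ∏ i ∈ range h, f i := by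
  classical
  haveI : Fintype {v : SSTVert f // v.1 = n-k} :=
    Fintype.ofEquiv _ (sstDepthEquiv f (n-k)).symm
  set lowF : Finset {v : SSTVert f // v.1 ≤ n} :=
    Finset.univ.filter (fun x => x.1.1 < n-k) with hlowF
  set F : Finset (SSTtrunc f n).Subgraph :=
    lowF.image (fun x => SimpleGraph.singletonSubgraph (SSTtrunc f n) x) ∪
    (Finset.univ : Finset {v : SSTVert f // v.1 = n-k}).image
      (fun z => boxSub f n (n-k) z.1) with hF
  refine ⟨F, ?_, ?_, ?_⟩
  · intro B hB
    rw [hF, Finset.mem_union] at hB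
    rcases hB with hB | hB
    · obtain ⟨x, -, rfl⟩ := Finset.mem_image.1 hB
      exact singleton_isBox _ _ _
    · obtain ⟨z, -, rfl⟩ := Finset.mem_image.1 hB
      exact boxSub_isBox f n k hkn z.1 z.2 _ le_rfl
  · intro x
    rcases lt_or_ge x.1.1 (n-k) with hx | hx
    · refine ⟨SimpleGraph.singletonSubgraph (SSTtrunc f n) x, ?_, rfl⟩
      rw [hF, Finset.mem_union]
      left
      exact Finset.mem_image.2 ⟨x, by simp [hlowF, hx], rfl⟩
    · have hzdep : (sstAnc f x.1 (n-k)).1 = n-k := by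
        rw [sstAnc_fst]
        have := x.2
        omega
      refine ⟨boxSub f n (n-k) (sstAnc f x.1 (n-k)), ?_, ?_⟩
      · rw [hF, Finset.mem_union]
        right
        exact Finset.mem_image.2 ⟨⟨sstAnc f x.1 (n-k), hzdep⟩, Finset.mem_univ _, rfl⟩
      · rw [boxSub_verts]
        exact ⟨hx, rfl⟩
  · calc F.card ≤ (lowF.image (fun x => SimpleGraph.singletonSubgraph (SSTtrunc f n) x)).card
        + ((Finset.univ : Finset {v : SSTVert f // v.1 = n-k}).image
          (fun z => boxSub f n (n-k) z.1)).card := Finset.card_union_le _ _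
      _ ≤ lowF.card + Fintype.card {v : SSTVert f // v.1 = n-k} := by
          gcongr
          · exact Finset.card_image_le
          · exact le_trans Finset.card_image_le (le_of_eq (Finset.card_univ))
      _ = (∑ h ∈ range (n-k), ∏ i ∈ range h, f i) + ∏ i ∈ range (n-k), f i := by
          congr 1
          · rw [hlowF, ← Fintype.card_subtype,
              ← Nat.card_eq_fintype_card,
              Nat.card_congr (sstEqLtEquiv f n (n-k) (by omega)), card_lt_eq]
          · rw [← Nat.card_eq_fintype_card, Nat.card_congr (sstDepthEquiv f (n-k)),
              Nat.card_pi, ← Fin.prod_univ_eq_prod_range (fun i => f i) (n-k)]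
            exact Finset.prod_congr rfl (fun i _ => by simp [Nat.card_eq_fintype_card])
      _ = ∑ h ∈ range (n-k+1), ∏ i ∈ range h, f i := (Finset.sum_range_succ _ _).symm

lemma cov_le (n k : ℕ) (hkn : k ≤ n) :
    coveringNumber (SSTtrunc f n) (2*k+1) ≤ ∑ h ∈ range (n-k+1), ∏ i ∈ range h, f i := by
  obtain ⟨F, hbox, hcov, hcard⟩ := cov_exists f n k hkn
  exact le_trans (Nat.sInf_le ⟨F, rfl, hbox, hcov⟩) hcard

def extLeaf (hf1 : ∀ h, 1 ≤ f h) (n k : ℕ) (w : ∀ i : Fin (n-k), Fin (f i)) :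
    ∀ i : Fin n, Fin (f i) :=
  fun i => if h : i.1 < n-k then w ⟨i.1, h⟩ else ⟨0, hf1 i.1⟩

lemma cov_ge (hf1 : ∀ h, 1 ≤ f h) (n k : ℕ) (hkn : k ≤ n) :
    ∏ i ∈ range (n-k), f i ≤ coveringNumber (SSTtrunc f n) (2*k+1) := by
  classical
  obtain ⟨F0, hbox0, hcov0, -⟩ := cov_exists f n k hkn
  unfold coveringNumber
  have hne : {m : ℕ | ∃ F : Finset (SSTtrunc f n).Subgraph, F.card = m ∧
      (∀ B ∈ F, (SSTtrunc f n).IsBox (2*k+1) B) ∧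
      ∀ v : {v : SSTVert f // v.1 ≤ n}, ∃ B ∈ F, v ∈ B.verts}.Nonempty :=
    ⟨F0.card, F0, rfl, hbox0, hcov0⟩
  obtain ⟨F, hFcard, hbox, hcov⟩ := Nat.sInf_mem hne
  rw [← hFcard]
  set leaf : (∀ i : Fin (n-k), Fin (f i)) → {v : SSTVert f // v.1 ≤ n} :=
    fun w => ⟨⟨n, extLeaf f hf1 n k w⟩, le_rfl⟩ with hleaf
  have hchoice : ∀ w, ∃ B ∈ F, leaf w ∈ B.verts := fun w => hcov (leaf w)
  choose Bw hBF hBmem using hchoice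
  have hinj : Function.Injective Bw := by
    intro w w' heq
    by_contra hneq
    obtain ⟨j, hj⟩ := Function.ne_iff.1 hneq
    have hjk : j.1 < n-k := j.2
    have hjn : j.1 < n := by omega
    have hmem' : leaf w' ∈ (Bw w).verts := by rw [heq]; exact hBmem w'
    obtain ⟨hreach, hdist⟩ := hbox (Bw w) (hBF w) ⟨leaf w, hBmem w⟩ ⟨leaf w', hmem'⟩
    obtain ⟨q, hq⟩ := hreach.exists_walk_length_eq_dist
    have hq2k : q.length ≤ 2*k := by omega
    let q2 := (q.map (Bw w).hom).map (truncHom f n)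
    have hlen2 : q2.length = q.length := by
      show ((q.map (Bw w).hom).map (truncHom f n)).length = q.length
      rw [SimpleGraph.Walk.length_map, SimpleGraph.Walk.length_map]
    have hvalne : ((⟨n, extLeaf f hf1 n k w⟩ : SSTVert f).2 ⟨j.1, hjn⟩ : ℕ)
        ≠ ((⟨n, extLeaf f hf1 n k w'⟩ : SSTVert f).2 ⟨j.1, hjn⟩ : ℕ) := by
      show ((extLeaf f hf1 n k w ⟨j.1, hjn⟩ : Fin _) : ℕ)
        ≠ ((extLeaf f hf1 n k w' ⟨j.1, hjn⟩ : Fin _) : ℕ)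
      unfold extLeaf
      rw [dif_pos (show ((⟨j.1, hjn⟩ : Fin n)).1 < n-k from hjk),
        dif_pos (show ((⟨j.1, hjn⟩ : Fin n)).1 < n-k from hjk)]
      intro hval
      exact hj (Fin.val_injective hval)
    have he1 : truncHom f n ((Bw w).hom ⟨leaf w, hBmem w⟩)
        = (⟨n, extLeaf f hf1 n k w⟩ : SSTVert f) := rfl
    have he2 : truncHom f n ((Bw w).hom ⟨leaf w', hmem'⟩)
        = (⟨n, extLeaf f hf1 n k w'⟩ : SSTVert f) := rfl
    have hsep := sst_sep_length f (q2.copy he1 he2) j.1 hjn hjn hvalne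
    have hlc : (q2.copy he1 he2).length = q2.length := SimpleGraph.Walk.length_copy _ _ _
    have hsep' : (n - j.1) + (n - j.1) ≤ (q2.copy he1 he2).length := hsep
    omega
  calc ∏ i ∈ range (n-k), f i = Fintype.card (∀ i : Fin (n-k), Fin (f i)) := by
        rw [Fintype.card_pi, ← Fin.prod_univ_eq_prod_range (fun i => f i) (n-k)]
        exact (Finset.prod_congr rfl (fun i _ => by simp)).symm
    _ ≤ F.card := by
        rw [← Finset.card_univ]
        exact Finset.card_le_card_of_injOn Bw (fun w _ => hBF w) (Set.injOn_of_injective hinj)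

end cov

section anal
variable (a b : ℝ) (f : ℕ → ℕ)

lemma prod_eq_exp (hf1 : ∀ h, 1 ≤ f h) (hgf : ∀ h, Real.log (f h) = gfun a b h) (n : ℕ) :
    ∏ h ∈ range n, (f h : ℝ) = Real.exp (∑ h ∈ range n, gfun a b h) := by
  rw [Real.exp_sum]
  apply Finset.prod_congr rfl
  intro h _
  rw [← hgf h, Real.exp_log]
  have h1 : (1:ℝ) ≤ (f h : ℝ) := by exact_mod_cast hf1 h
  linarith

lemma sumN_bound (ha : 0 < a) (hb : 0 < b) (hf1 : ∀ h, 1 ≤ f h)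
    (hgf : ∀ h, Real.log (f h) = gfun a b h) (n : ℕ) :
    ∑ h ∈ range (n+1), ∏ i ∈ range h, (f i : ℝ)
      ≤ (1 - Real.exp (-(min a b)))⁻¹ * Real.exp (∑ h ∈ range n, gfun a b h) := by
  have hc : 0 < min a b := lt_min ha hb
  have hg_ge : ∀ h, min a b ≤ gfun a b h := fun h => by
    unfold gfun; split_ifs
    · exact min_le_left _ _
    · exact min_le_right _ _
  have hexpc : Real.exp (-(min a b)) < 1 := by
    rw [Real.exp_lt_one_iff]
    linarith
  have hexpc0 : 0 ≤ Real.exp (-(min a b)) := (Real.exp_pos _).le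
  have hterm : ∀ h ∈ range (n+1), ∏ i ∈ range h, (f i:ℝ)
      ≤ Real.exp (∑ j ∈ range n, gfun a b j) * (Real.exp (-(min a b)))^(n - h) := by
    intro h hh
    rw [Finset.mem_range] at hh
    rw [prod_eq_exp a b f hf1 hgf h, ← Real.exp_nat_mul, ← Real.exp_add]
    apply Real.exp_le_exp.2
    have hsplit : ∑ j ∈ range h, gfun a b j + ∑ j ∈ Ico h n, gfun a b j
        = ∑ j ∈ range n, gfun a b j := Finset.sum_range_add_sum_Ico _ (by omega)
    have hlow : ((n - h : ℕ) : ℝ) * min a b ≤ ∑ j ∈ Ico h n, gfun a b j := by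
      calc ((n-h:ℕ):ℝ) * min a b = ∑ _j ∈ Ico h n, min a b := by
            rw [Finset.sum_const, Nat.card_Ico, nsmul_eq_mul]
        _ ≤ _ := Finset.sum_le_sum (fun j _ => hg_ge j)
    nlinarith [hsplit, hlow]
  calc ∑ h ∈ range (n+1), ∏ i ∈ range h, (f i:ℝ)
      ≤ ∑ h ∈ range (n+1), Real.exp (∑ j ∈ range n, gfun a b j) * (Real.exp (-(min a b)))^(n - h) :=
        Finset.sum_le_sum hterm
    _ = Real.exp (∑ j ∈ range n, gfun a b j) * ∑ h ∈ range (n+1), (Real.exp (-(min a b)))^(n-h) := by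
        rw [← Finset.mul_sum]
    _ = Real.exp (∑ j ∈ range n, gfun a b j) * ∑ j ∈ range (n+1), (Real.exp (-(min a b)))^j := by
        congr 1
        rw [← Finset.sum_range_reflect (fun j => (Real.exp (-(min a b)))^j) (n+1)]
        apply Finset.sum_congr rfl
        intro h hh
        rw [Finset.mem_range] at hh
        congr 1
    _ ≤ Real.exp (∑ j ∈ range n, gfun a b j) * (1 - Real.exp (-(min a b)))⁻¹ := by
        apply mul_le_mul_of_nonneg_left _ (Real.exp_pos _).le
        calc ∑ j ∈ range (n+1), (Real.exp (-(min a b)))^j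
            ≤ ∑' j : ℕ, (Real.exp (-(min a b)))^j :=
              Summable.sum_le_tsum _ (fun i _ => by positivity)
                (summable_geometric_of_lt_one hexpc0 hexpc)
          _ = (1 - Real.exp (-(min a b)))⁻¹ := tsum_geometric_of_lt_one hexpc0 hexpc
    _ = (1 - Real.exp (-(min a b)))⁻¹ * Real.exp (∑ h ∈ range n, gfun a b h) := mul_comm _ _

lemma sumN_ge (hf1 : ∀ h, 1 ≤ f h) (hgf : ∀ h, Real.log (f h) = gfun a b h) (n : ℕ) :
    Real.exp (∑ h ∈ range n, gfun a b h) ≤ ∑ h ∈ range (n+1), ∏ i ∈ range h, (f i : ℝ) := by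
  rw [← prod_eq_exp a b f hf1 hgf n]
  apply Finset.single_le_sum (f := fun h => ∏ i ∈ range h, (f i:ℝ))
    (fun i _ => by positivity) (Finset.self_mem_range_succ n)

end anal

/-- Let `0 < a`, `0 < b`, `a ≠ b`, and let `f : ℕ → ℕ⁺` satisfy
`log f(h) = a` when `m(m+1) < h ≤ (m+1)²` for some `m ∈ ℕ`, and `log f(h) = b`
otherwise.  Then the growth rate of the spherically symmetric tree `T_∞^f` exists and
equals `e^{(a+b)/2}` — i.e. `lim_{n→∞} (1/n) Σ_{h<n} log f(h) = (a+b)/2` and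
`lim_n L_n^{1/n} = e^{(a+b)/2}` — but for every fixed `k ≥ 1` the window sums
`Σ_{h=n-k}^{n-1} log f(h)` do not converge as `n → ∞`, and the transfinite fractal
dimension of the truncation sequence `{T_n}` does not exist. -/
theorem sst_example_growth_exists_tau_does_not
    (a b : ℝ) (ha : 0 < a) (hb : 0 < b) (hab : a ≠ b)
    (f : ℕ → ℕ) (hf1 : ∀ h, 1 ≤ f h)
    (hf : ∀ h : ℕ, Real.log (f h) =
      if ∃ m : ℕ, m * (m + 1) < h ∧ h ≤ (m + 1) ^ 2 then a else b) :
    Tendsto (fun n : ℕ => (∑ h ∈ Finset.range n, Real.log (f h)) / (n : ℝ))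
      atTop (nhds ((a + b) / 2)) ∧
    Tendsto (fun n : ℕ => (SSTgen f n : ℝ) ^ ((n : ℝ)⁻¹))
      atTop (nhds (Real.exp ((a + b) / 2))) ∧
    (∀ k : ℕ, 1 ≤ k →
      ¬ ∃ c : ℝ, Tendsto (fun n : ℕ => ∑ h ∈ Finset.Ico (n - k) n, Real.log (f h))
        atTop (nhds c)) ∧
    ¬ ∃ (τ : ℝ) (L : ℕ → ℝ),
        (∀ ℓ : ℕ, Tendsto (fun n : ℕ =>
            Real.log ((coveringNumber (SSTtrunc f n) ℓ : ℝ) /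
              (Nat.card {v : SSTVert f // v.1 ≤ n} : ℝ)) / (-(ℓ : ℝ)))
          atTop (nhds (L ℓ))) ∧
        Tendsto L atTop (nhds τ) := by
  have hgf : ∀ h, Real.log (f h) = gfun a b h := fun h => hf h
  have hsum : ∀ n : ℕ, ∑ h ∈ range n, Real.log (f h) = ∑ h ∈ range n, gfun a b h :=
    fun n => Finset.sum_congr rfl (fun h _ => hgf h)
  have havg0 := gfun_avg_tendsto a b ha hb
  have havg : Tendsto (fun n : ℕ => (∑ h ∈ Finset.range n, Real.log (f h)) / (n : ℝ))
      atTop (nhds ((a + b) / 2)) := by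
    apply havg0.congr
    intro n
    rw [hsum n]
  refine ⟨havg, ?_, ?_, ?_⟩
  · -- growth rate
    have hexp : Tendsto (fun n : ℕ => Real.exp ((∑ h ∈ range n, gfun a b h)/(n:ℝ)))
        atTop (nhds (Real.exp ((a+b)/2))) :=
      (Real.continuous_exp.tendsto _).comp havg0
    apply hexp.congr'
    filter_upwards [eventually_ge_atTop 1] with n hn
    rw [sstgen_eq f n]
    have hcast : ((∏ i ∈ range n, f i : ℕ) : ℝ) = ∏ i ∈ range n, (f i : ℝ) := by push_cast; rfl
    rw [hcast, prod_eq_exp a b f hf1 hgf n,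
      Real.rpow_def_of_pos (Real.exp_pos _), Real.log_exp]
    rw [div_eq_mul_inv]
  · -- windows don't converge
    intro k hk
    rintro ⟨c, hc⟩
    apply gfun_window_not_conv a b hab k hk
    refine ⟨c, hc.congr (fun n => ?_)⟩
    exact Finset.sum_congr rfl (fun h _ => hgf h)
  · -- no transfinite dimension
    rintro ⟨τ, L, hL, -⟩
    set c := min a b with hcdef
    have hc : 0 < c := lt_min ha hb
    set C : ℝ := (1 - Real.exp (-c))⁻¹ with hCdef
    have hexpc : Real.exp (-c) < 1 := by rw [Real.exp_lt_one_iff]; linarith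
    have hC0 : 0 < C := by
      rw [hCdef]
      have := Real.exp_pos (-c)
      apply inv_pos.2
      linarith
    set lC := Real.log C with hlCdef
    have habs : 0 < |a - b| := abs_pos.2 (sub_ne_zero.2 hab)
    set k := ⌈(2*lC + 1)/|a-b|⌉₊ + 1 with hkdef
    have hklarge : 2*lC < (k:ℝ) * |a-b| := by
      have h1 : (2*lC+1)/|a-b| ≤ (⌈(2*lC+1)/|a-b|⌉₊ : ℝ) := Nat.le_ceil _
      have h2 : ((⌈(2*lC+1)/|a-b|⌉₊ : ℕ) : ℝ) + 1 = (k:ℝ) := by rw [hkdef]; push_cast; ring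
      have h3 : (2*lC+1) ≤ ((⌈(2*lC+1)/|a-b|⌉₊ : ℕ) : ℝ) * |a-b| := by
        rw [div_le_iff₀ habs] at h1
        linarith
      nlinarith [h3, habs, h2]
    have hl0 : (0:ℝ) < ((2*k+1 : ℕ) : ℝ) := by positivity
    have hTend := hL (2*k+1)
    -- general bounds on the quantity
    set Q : ℕ → ℝ := fun n => Real.log ((coveringNumber (SSTtrunc f n) (2*k+1) : ℝ) /
        (Nat.card {v : SSTVert f // v.1 ≤ n} : ℝ)) / (-((2*k+1 : ℕ) : ℝ)) with hQdef
    have hQb : ∀ n : ℕ, k ≤ n →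
        ((∑ h ∈ Ico (n-k) n, gfun a b h) - lC)/((2*k+1 : ℕ):ℝ) ≤ Q n ∧
        Q n ≤ ((∑ h ∈ Ico (n-k) n, gfun a b h) + lC)/((2*k+1 : ℕ):ℝ) := by
      intro n hn
      have hcovge : Real.exp (∑ h ∈ range (n-k), gfun a b h)
          ≤ (coveringNumber (SSTtrunc f n) (2*k+1) : ℝ) := by
        rw [← prod_eq_exp a b f hf1 hgf (n-k)]
        have h1 := cov_ge f hf1 n k hn
        calc ∏ i ∈ range (n-k), (f i:ℝ) = ((∏ i ∈ range (n-k), f i : ℕ) : ℝ) := by push_cast; rfl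
          _ ≤ _ := by exact_mod_cast h1
      have hcovle : (coveringNumber (SSTtrunc f n) (2*k+1) : ℝ)
          ≤ C * Real.exp (∑ h ∈ range (n-k), gfun a b h) := by
        have h1 := cov_le f n k hn
        calc (coveringNumber (SSTtrunc f n) (2*k+1) : ℝ)
            ≤ ((∑ h ∈ range (n-k+1), ∏ i ∈ range h, f i : ℕ) : ℝ) := by exact_mod_cast h1
          _ = ∑ h ∈ range (n-k+1), ∏ i ∈ range h, (f i : ℝ) := by push_cast; rfl
          _ ≤ _ := sumN_bound a b f ha hb hf1 hgf (n-k)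
      have hNge : Real.exp (∑ h ∈ range n, gfun a b h)
          ≤ ((Nat.card {v : SSTVert f // v.1 ≤ n}) : ℝ) := by
        rw [card_le_eq]
        calc Real.exp (∑ h ∈ range n, gfun a b h)
            ≤ ∑ h ∈ range (n+1), ∏ i ∈ range h, (f i : ℝ) := sumN_ge a b f hf1 hgf n
          _ = ((∑ h ∈ range (n+1), ∏ i ∈ range h, f i : ℕ) : ℝ) := by push_cast; rfl
      have hNle : ((Nat.card {v : SSTVert f // v.1 ≤ n}) : ℝ)
          ≤ C * Real.exp (∑ h ∈ range n, gfun a b h) := by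
        rw [card_le_eq]
        calc ((∑ h ∈ range (n+1), ∏ i ∈ range h, f i : ℕ) : ℝ)
            = ∑ h ∈ range (n+1), ∏ i ∈ range h, (f i : ℝ) := by push_cast; rfl
          _ ≤ _ := sumN_bound a b f ha hb hf1 hgf n
      have hcov0 : (0:ℝ) < (coveringNumber (SSTtrunc f n) (2*k+1) : ℝ) :=
        lt_of_lt_of_le (Real.exp_pos _) hcovge
      have hN0 : (0:ℝ) < ((Nat.card {v : SSTVert f // v.1 ≤ n}) : ℝ) :=
        lt_of_lt_of_le (Real.exp_pos _) hNge
      have hlogcov_lo : (∑ h ∈ range (n-k), gfun a b h)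
          ≤ Real.log (coveringNumber (SSTtrunc f n) (2*k+1) : ℝ) := by
        have := Real.log_le_log (Real.exp_pos _) hcovge
        rwa [Real.log_exp] at this
      have hlogcov_hi : Real.log (coveringNumber (SSTtrunc f n) (2*k+1) : ℝ)
          ≤ lC + ∑ h ∈ range (n-k), gfun a b h := by
        have h2 := Real.log_le_log hcov0 hcovle
        rwa [Real.log_mul (ne_of_gt hC0) (ne_of_gt (Real.exp_pos _)), Real.log_exp] at h2
      have hlogN_lo : (∑ h ∈ range n, gfun a b h)
          ≤ Real.log ((Nat.card {v : SSTVert f // v.1 ≤ n}) : ℝ) := by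
        have := Real.log_le_log (Real.exp_pos _) hNge
        rwa [Real.log_exp] at this
      have hlogN_hi : Real.log ((Nat.card {v : SSTVert f // v.1 ≤ n}) : ℝ)
          ≤ lC + ∑ h ∈ range n, gfun a b h := by
        have h2 := Real.log_le_log hN0 hNle
        rwa [Real.log_mul (ne_of_gt hC0) (ne_of_gt (Real.exp_pos _)), Real.log_exp] at h2
      have hwin : ∑ h ∈ range (n-k), gfun a b h + ∑ h ∈ Ico (n-k) n, gfun a b h
          = ∑ h ∈ range n, gfun a b h := Finset.sum_range_add_sum_Ico _ (by omega)
      have hQeq : Q n = (Real.log ((Nat.card {v : SSTVert f // v.1 ≤ n}) : ℝ)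
          - Real.log (coveringNumber (SSTtrunc f n) (2*k+1) : ℝ)) / ((2*k+1 : ℕ):ℝ) := by
        simp only [hQdef]
        rw [Real.log_div (ne_of_gt hcov0) (ne_of_gt hN0), div_neg, ← neg_div, neg_sub]
      constructor
      · rw [hQeq, div_le_div_iff_of_pos_right hl0]
        linarith [hlogN_lo, hlogcov_hi, hwin]
      · rw [hQeq, div_le_div_iff_of_pos_right hl0]
        linarith [hlogN_hi, hlogcov_lo, hwin]
    -- subsequence limits
    have hsubA := hTend.comp sq_seq_tendsto
    have hsubB := hTend.comp pr_seq_tendsto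
    have hA_hi : L (2*k+1) ≤ ((k:ℝ)*a + lC)/((2*k+1:ℕ):ℝ) := by
      apply le_of_tendsto hsubA
      filter_upwards [eventually_ge_atTop k] with m hm
      have hkn : k ≤ (m+1)^2 := by nlinarith
      have h2 := (hQb ((m+1)^2) hkn).2
      rwa [gfun_window_a a b k m hm] at h2
    have hA_lo : ((k:ℝ)*a - lC)/((2*k+1:ℕ):ℝ) ≤ L (2*k+1) := by
      apply ge_of_tendsto hsubA
      filter_upwards [eventually_ge_atTop k] with m hm
      have hkn : k ≤ (m+1)^2 := by nlinarith
      have h2 := (hQb ((m+1)^2) hkn).1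
      rwa [gfun_window_a a b k m hm] at h2
    have hB_hi : L (2*k+1) ≤ ((k:ℝ)*b + lC)/((2*k+1:ℕ):ℝ) := by
      apply le_of_tendsto hsubB
      filter_upwards [eventually_ge_atTop k] with m hm
      have hkn : k ≤ (m+1)*(m+2) := by nlinarith
      have h2 := (hQb ((m+1)*(m+2)) hkn).2
      rwa [gfun_window_b a b k m hm] at h2
    have hB_lo : ((k:ℝ)*b - lC)/((2*k+1:ℕ):ℝ) ≤ L (2*k+1) := by
      apply ge_of_tendsto hsubB
      filter_upwards [eventually_ge_atTop k] with m hm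
      have hkn : k ≤ (m+1)*(m+2) := by nlinarith
      have h2 := (hQb ((m+1)*(m+2)) hkn).1
      rwa [gfun_window_b a b k m hm] at h2
    -- combine
    have h1 : (k:ℝ)*a - lC ≤ (k:ℝ)*b + lC := by
      have := le_trans hA_lo hB_hi
      rwa [div_le_div_iff_of_pos_right hl0] at this
    have h2 : (k:ℝ)*b - lC ≤ (k:ℝ)*a + lC := by
      have := le_trans hB_lo hA_hi
      rwa [div_le_div_iff_of_pos_right hl0] at this
    have habsle : (k:ℝ) * |a - b| ≤ 2*lC := by
      rw [← abs_of_nonneg (show (0:ℝ) ≤ (k:ℝ) by positivity), ← abs_mul]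
      rw [abs_le]
      constructor
      · nlinarith
      · nlinarith
    linarith
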